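/- Let {φ_e}_{e∈E} be a conformal iterated function system in ℝⁿ with limit set J, and assume X ∖ closure(⋃_{e∈E} φ_e(X)) ≠ ∅. Then for every nonempty finite word ω over E, J is porous at the unique fixed point x_ω of φ_ω (the unique point with φ_ω(x_ω) = x_ω, equivalently {x_ω} = ⋂_{n≥1} φ_ω^n(X)), and the set { x_ω : ω a nonempty finite word over E } is dense in J; in particular J is porous at every point of a dense subset of J. -/

import Mathlib

open Metric Set Filter

/-- `por A x r` is the porosity of the set `A` at the point `x` at scale `r`:
the supremum of all `c ≥ 0` such that some open ball of radius `c·r` is contained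
in `B(x,r) ∖ A`. -/
noncomputable def por {X : Type*} [MetricSpace X] (A : Set X) (x : X) (r : ℝ) : ℝ :=
  sSup {c : ℝ | 0 ≤ c ∧ ∃ y : X, Metric.ball y (c * r) ⊆ Metric.ball x r \ A}

/-- `A` is porous at the point `x`. -/
def PorousAt {X : Type*} [MetricSpace X] (A : Set X) (x : X) : Prop :=
  ∃ c ∈ Set.Ioo (0 : ℝ) 1, ∃ r₀ > (0 : ℝ), ∀ r ∈ Set.Ioo (0 : ℝ) r₀, c ≤ por A x r

/-- `A` is porous. -/
def Porous {X : Type*} [MetricSpace X] (A : Set X) : Prop :=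
  ∃ c ∈ Set.Ioo (0 : ℝ) 1, ∃ r₀ > (0 : ℝ), ∀ x ∈ A, ∀ r ∈ Set.Ioo (0 : ℝ) r₀, c ≤ por A x r

/-- A conformal iterated function system in `ℝⁿ` (single-vertex conformal GDMS):
a compact connected set `X` equal to the closure of its interior, an open connected
set `W ⊇ X`, and injective `C¹` maps `φ e : W → W` with conformal (invertibly similar)
derivatives `D e`, mapping `X` into `X`, with Lipschitz constant at most `s ∈ (0,1)`
on `W`, satisfying the Open Set Condition. -/
structure CIFS (n : ℕ) (E : Type*) where
  X : Set (EuclideanSpace ℝ (Fin n))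
  W : Set (EuclideanSpace ℝ (Fin n))
  φ : E → EuclideanSpace ℝ (Fin n) → EuclideanSpace ℝ (Fin n)
  D : E → EuclideanSpace ℝ (Fin n) → EuclideanSpace ℝ (Fin n) →L[ℝ] EuclideanSpace ℝ (Fin n)
  s : ℝ
  hs : s ∈ Set.Ioo (0 : ℝ) 1
  hXcompact : IsCompact X
  hXconn : IsConnected X
  hXreg : X = closure (interior X)
  hWopen : IsOpen W
  hWconn : IsConnected W
  hXW : X ⊆ W
  hInj : ∀ e, Set.InjOn (φ e) W
  hMapsW : ∀ e, Set.MapsTo (φ e) W W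
  hMapsX : ∀ e, Set.MapsTo (φ e) X X
  hDeriv : ∀ e, ∀ x ∈ W, HasFDerivAt (φ e) (D e x) x
  hConf : ∀ e, ∀ x ∈ W, IsConformalMap (D e x)
  hLip : ∀ e, LipschitzOnWith s.toNNReal (φ e) W
  hOSC : ∀ a b : E, a ≠ b → Disjoint (φ a '' interior X) (φ b '' interior X)

namespace CIFS

variable {n : ℕ} {E : Type*}

/-- The composition `φ_ω = φ_{ω₁} ∘ ⋯ ∘ φ_{ωₙ}` associated to a finite word `ω`. -/
def compWord (S : CIFS n E) (ω : List E) :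
    EuclideanSpace ℝ (Fin n) → EuclideanSpace ℝ (Fin n) :=
  ω.foldr (fun e g => S.φ e ∘ g) id

/-- The derivative of `φ_ω` at a point, computed by the chain rule. -/
noncomputable def derivWord (S : CIFS n E) :
    List E → EuclideanSpace ℝ (Fin n) →
      (EuclideanSpace ℝ (Fin n) →L[ℝ] EuclideanSpace ℝ (Fin n))
  | [], _ => ContinuousLinearMap.id ℝ _
  | e :: ω, x => (S.D e (S.compWord ω x)).comp (S.derivWord ω x)

/-- The Bounded Distortion Property: there is `K ≥ 1` such that
`‖Dφ_ω(p)‖ ≤ K·‖Dφ_ω(q)‖` for every nonempty word `ω` and all `p, q ∈ W`. -/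
def BDP (S : CIFS n E) : Prop :=
  ∃ K : ℝ, 1 ≤ K ∧ ∀ ω : List E, ω ≠ [] → ∀ p ∈ S.W, ∀ q ∈ S.W,
    ‖S.derivWord ω p‖ ≤ K * ‖S.derivWord ω q‖

end CIFS


set_option maxHeartbeats 1000000
set_option synthInstance.maxHeartbeats 400000
set_option linter.unusedSectionVars false
open Topology

section Conf
variable {V : Type*} [NormedAddCommGroup V] [InnerProductSpace ℝ V] [Nontrivial V]
  [FiniteDimensional ℝ V]

theorem conformal_norm_apply {A : V →L[ℝ] V} (hA : IsConformalMap A) (v : V) :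
    ‖A v‖ = ‖A‖ * ‖v‖ := by
  obtain ⟨c, hc, li, rfl⟩ := hA
  have hpt : ∀ w : V, ‖(c • li.toContinuousLinearMap) w‖ = ‖c‖ * ‖w‖ := fun w => by
    rw [ContinuousLinearMap.smul_apply, norm_smul]
    simp [li.norm_map]
  have hnorm : ‖c • li.toContinuousLinearMap‖ = ‖c‖ := by
    refine le_antisymm (ContinuousLinearMap.opNorm_le_bound _ (norm_nonneg c) fun w => ?_) ?_
    · rw [hpt w]
    · obtain ⟨w, hw⟩ := (NormedSpace.sphere_nonempty (x := (0 : V)) (r := 1)).mpr zero_le_one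
      have hw1 : ‖w‖ = 1 := by simpa [mem_sphere_iff_norm] using hw
      have := (c • li.toContinuousLinearMap).le_opNorm w
      rw [hpt w, hw1, mul_one, mul_one] at this
      exact this
  rw [hnorm]
  exact hpt v

theorem conformal_norm_pos {A : V →L[ℝ] V} (hA : IsConformalMap A) : 0 < ‖A‖ :=
  norm_pos_iff.mpr hA.ne_zero

theorem conformal_norm_comp {A B : V →L[ℝ] V} (hA : IsConformalMap A) :
    ‖A.comp B‖ = ‖A‖ * ‖B‖ := by
  have hpos := conformal_norm_pos hA
  have h1 : ∀ v, ‖(A.comp B) v‖ = ‖A‖ * ‖B v‖ := fun v => by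
    rw [ContinuousLinearMap.comp_apply, conformal_norm_apply hA]
  refine le_antisymm ?_ ?_
  · refine ContinuousLinearMap.opNorm_le_bound _ (by positivity) fun v => ?_
    rw [h1, mul_assoc]
    exact mul_le_mul_of_nonneg_left (B.le_opNorm v) (norm_nonneg A)
  · have h2 : ∀ v, ‖A‖ * ‖B v‖ ≤ ‖A.comp B‖ * ‖v‖ := fun v => by
      rw [← h1]; exact (A.comp B).le_opNorm v
    have hB : ‖B‖ ≤ ‖A.comp B‖ / ‖A‖ := by
      refine ContinuousLinearMap.opNorm_le_bound _ (by positivity) fun v => ?_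
      rw [div_mul_eq_mul_div, le_div_iff₀ hpos, mul_comm]
      exact h2 v
    calc ‖A‖ * ‖B‖ ≤ ‖A‖ * (‖A.comp B‖ / ‖A‖) := by
          exact mul_le_mul_of_nonneg_left hB hpos.le
      _ = ‖A.comp B‖ := by field_simp

theorem conformal_surjective {A : V →L[ℝ] V} (hA : IsConformalMap A) :
    Function.Surjective A := by
  have hinj : Function.Injective A := hA.injective
  have : Function.Injective (A : V →ₗ[ℝ] V) := hinj
  exact LinearMap.injective_iff_surjective.mp this

end Conf

namespace CIFS

variable {n : ℕ} {E : Type*} (S : CIFS n E)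

theorem compWord_nil : S.compWord [] = id := rfl

theorem compWord_cons (e : E) (ω : List E) :
    S.compWord (e :: ω) = S.φ e ∘ S.compWord ω := rfl

theorem compWord_append (α β : List E) :
    S.compWord (α ++ β) = S.compWord α ∘ S.compWord β := by
  induction α with
  | nil => rfl
  | cons e γ ih =>
      show S.compWord (e :: (γ ++ β)) = _
      rw [compWord_cons, ih, compWord_cons, Function.comp_assoc]

theorem mapsTo_W (α : List E) : Set.MapsTo (S.compWord α) S.W S.W := by
  induction α with
  | nil => exact Set.mapsTo_id _
  | cons e γ ih => exact (S.hMapsW e).comp ih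

theorem mapsTo_X (α : List E) : Set.MapsTo (S.compWord α) S.X S.X := by
  induction α with
  | nil => exact Set.mapsTo_id _
  | cons e γ ih => exact (S.hMapsX e).comp ih

theorem injOn_compWord (α : List E) : Set.InjOn (S.compWord α) S.W := by
  induction α with
  | nil => exact Set.injOn_id _
  | cons e γ ih =>
      rw [compWord_cons]
      exact Set.InjOn.comp (S.hInj e) ih (S.mapsTo_W γ)

theorem hasFDerivAt_compWord (α : List E) {p : EuclideanSpace ℝ (Fin n)} (hp : p ∈ S.W) :
    HasFDerivAt (S.compWord α) (S.derivWord α p) p := by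
  induction α with
  | nil => exact hasFDerivAt_id p
  | cons e γ ih =>
      exact (S.hDeriv e _ (S.mapsTo_W γ hp)).comp p ih

theorem conformal_derivWord (α : List E) {p : EuclideanSpace ℝ (Fin n)} (hp : p ∈ S.W) :
    IsConformalMap (S.derivWord α p) := by
  induction α with
  | nil => exact isConformalMap_id
  | cons e γ ih => exact (S.hConf e _ (S.mapsTo_W γ hp)).comp ih

theorem derivWord_append (α β : List E) (p : EuclideanSpace ℝ (Fin n)) :
    S.derivWord (α ++ β) p =
      (S.derivWord α (S.compWord β p)).comp (S.derivWord β p) := by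
  induction α with
  | nil => simp [derivWord]
  | cons e γ ih =>
      show S.derivWord (e :: (γ ++ β)) p = _
      rw [derivWord, ih, derivWord]
      rw [compWord_append]
      simp [ContinuousLinearMap.comp_assoc]

theorem lipschitzOnWith_compWord (α : List E) :
    LipschitzOnWith (S.s.toNNReal ^ α.length) (S.compWord α) S.W := by
  induction α with
  | nil => simpa [compWord_nil] using (LipschitzWith.id).lipschitzOnWith (s := S.W)
  | cons e γ ih =>
      have := (S.hLip e).comp ih (S.mapsTo_W γ)
      simpa [pow_succ, mul_comm, compWord_cons] using this

theorem continuousOn_compWord (α : List E) : ContinuousOn (S.compWord α) S.W := by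
  intro p hp
  exact ((S.hasFDerivAt_compWord α hp).continuousAt).continuousWithinAt


theorem norm_D_le (e : E) {p : EuclideanSpace ℝ (Fin n)} (hp : p ∈ S.W) :
    ‖S.D e p‖ ≤ S.s := by
  have h := (S.hDeriv e p hp).le_of_lipschitzOn (S.hWopen.mem_nhds hp) (S.hLip e)
  rwa [Real.coe_toNNReal _ S.hs.1.le] at h

theorem norm_derivWord_le (α : List E) {p : EuclideanSpace ℝ (Fin n)} (hp : p ∈ S.W) :
    ‖S.derivWord α p‖ ≤ S.s ^ α.length := by
  induction α with
  | nil =>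
      simp only [derivWord, List.length_nil, pow_zero]
      exact ContinuousLinearMap.norm_id_le
  | cons e γ ih =>
      rw [derivWord]
      calc ‖(S.D e (S.compWord γ p)).comp (S.derivWord γ p)‖
          ≤ ‖S.D e (S.compWord γ p)‖ * ‖S.derivWord γ p‖ :=
            ContinuousLinearMap.opNorm_comp_le _ _
        _ ≤ S.s * S.s ^ γ.length := by
            refine mul_le_mul (S.norm_D_le e (S.mapsTo_W γ hp)) ih (norm_nonneg _) S.hs.1.le
        _ = S.s ^ (e :: γ).length := by rw [List.length_cons, pow_succ, mul_comm]


/-- Chain connectivity of the compact connected set `X`. -/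
theorem exists_chain {δ : ℝ} (hδ : 0 < δ) {p q : EuclideanSpace ℝ (Fin n)}
    (hp : p ∈ S.X) (hq : q ∈ S.X) :
    ∃ (N : ℕ) (f : ℕ → EuclideanSpace ℝ (Fin n)), f 0 = p ∧ f N = q ∧
      (∀ i ≤ N, f i ∈ S.X) ∧ ∀ i < N, dist (f (i+1)) (f i) ≤ δ := by
  set A := {b : EuclideanSpace ℝ (Fin n) | b ∈ S.X ∧
    ∃ (N : ℕ) (f : ℕ → EuclideanSpace ℝ (Fin n)), f 0 = p ∧ f N = b ∧
      (∀ i ≤ N, f i ∈ S.X) ∧ ∀ i < N, dist (f (i+1)) (f i) ≤ δ} with hA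
  have hpA : p ∈ A :=
    ⟨hp, 0, fun _ => p, rfl, rfl, fun _ _ => hp, fun i h => absurd h (Nat.not_lt_zero i)⟩
  have hextend : ∀ a ∈ A, ∀ b, b ∈ S.X → dist b a ≤ δ → b ∈ A := by
    rintro a ⟨haX, N, f, hf0, hfN, hfX, hfd⟩ b hbX hdist
    refine ⟨hbX, N+1, fun i => if i ≤ N then f i else b, ?_, ?_, ?_, ?_⟩
    · simp only [Nat.zero_le, if_pos]
      exact hf0
    · have hnot : ¬ (N+1 ≤ N) := by omega
      simp only [if_neg hnot]
    · intro i hi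
      by_cases h : i ≤ N
      · simp only [h, if_pos]
        exact hfX i h
      · simp only [h, if_neg]
        exact hbX
    · intro i hi
      by_cases h : i < N
      · have h1 : i + 1 ≤ N := h
        have h2 : i ≤ N := h.le
        simp only [h1, h2, if_pos]
        exact hfd i h
      · have hiN : i = N := by omega
        subst hiN
        have h1 : ¬ (i + 1 ≤ i) := by omega
        simp only [h1, if_neg, le_refl, if_pos]
        rw [hfN]
        exact hdist
  have hXsubA : S.X ⊆ A := by
    intro q' hq'
    by_contra hq'A
    have hu : IsOpen (⋃ a ∈ A, ball a δ) := isOpen_biUnion fun _ _ => isOpen_ball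
    have hv : IsOpen (⋃ b ∈ S.X \ A, ball b δ) := isOpen_biUnion fun _ _ => isOpen_ball
    have hcover : S.X ⊆ (⋃ a ∈ A, ball a δ) ∪ (⋃ b ∈ S.X \ A, ball b δ) := by
      intro x' hx'
      by_cases hx'A : x' ∈ A
      · exact Or.inl (mem_biUnion hx'A (mem_ball_self hδ))
      · exact Or.inr (mem_biUnion ⟨hx', hx'A⟩ (mem_ball_self hδ))
    have h1 : (S.X ∩ ⋃ a ∈ A, ball a δ).Nonempty :=
      ⟨p, hp, mem_biUnion hpA (mem_ball_self hδ)⟩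
    have h2 : (S.X ∩ ⋃ b ∈ S.X \ A, ball b δ).Nonempty :=
      ⟨q', hq', mem_biUnion ⟨hq', hq'A⟩ (mem_ball_self hδ)⟩
    obtain ⟨w, hwX, hwuv⟩ := S.hXconn.isPreconnected _ _ hu hv hcover h1 h2
    obtain ⟨a, haA, hwa⟩ := mem_iUnion₂.mp hwuv.1
    obtain ⟨b, hbXA, hwb⟩ := mem_iUnion₂.mp hwuv.2
    have hwA : w ∈ A := hextend a haA w hwX (mem_ball.mp hwa).le
    have hbA : b ∈ A := hextend w hwA b hbXA.1 (by
      rw [dist_comm]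
      exact (mem_ball.mp hwb).le)
    exact hbXA.2 hbA
  obtain ⟨_, N, f, h0, hN, hX, hd⟩ := hXsubA hq
  exact ⟨N, f, h0, hN, hX, hd⟩

/-- Distance bound along a chain. -/
theorem dist_image_le_chain
    {K : ℝ}
    (hKB : ∀ ω : List E, ω ≠ [] → ∀ p ∈ S.W, ∀ q ∈ S.W,
      ‖S.derivWord ω p‖ ≤ K * ‖S.derivWord ω q‖)
    (α : List E) (hα : α ≠ [])
    {δ : ℝ} (hδ : 0 < δ) (hδW : cthickening δ S.X ⊆ S.W)
    {q₀ : EuclideanSpace ℝ (Fin n)} (hq₀ : q₀ ∈ S.W) (hKnn : 0 ≤ K)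
    {N : ℕ} {f : ℕ → EuclideanSpace ℝ (Fin n)}
    (hfX : ∀ i ≤ N, f i ∈ S.X) (hfd : ∀ i < N, dist (f (i+1)) (f i) ≤ δ) :
    dist (S.compWord α (f N)) (S.compWord α (f 0)) ≤
      N * (K * ‖S.derivWord α q₀‖ * δ) := by
  set lam := ‖S.derivWord α q₀‖ with hlam
  have hlamnn : 0 ≤ lam := norm_nonneg _
  have hstep : ∀ i, i < N →
      dist (S.compWord α (f (i+1))) (S.compWord α (f i)) ≤ K * lam * δ := by
    intro i hi
    have haX : f i ∈ S.X := hfX i hi.le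
    have hbX : f (i+1) ∈ S.X := hfX (i+1) hi
    have hsegW : segment ℝ (f i) (f (i+1)) ⊆ S.W := by
      intro ξ hξ
      obtain ⟨u, v, hu, hv, huv, rfl⟩ := hξ
      apply hδW
      refine mem_cthickening_of_dist_le _ (f i) δ _ haX ?_
      have heq : u • f i + v • f (i+1) - f i = v • (f (i+1) - f i) := by
        have hu1 : u = 1 - v := by linarith
        rw [hu1, smul_sub, sub_smul, one_smul]
        abel
      rw [dist_eq_norm, heq, norm_smul, Real.norm_eq_abs, abs_of_nonneg hv]
      have h2 : ‖f (i+1) - f i‖ ≤ δ := by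
        rw [← dist_eq_norm]
        exact hfd i hi
      nlinarith [norm_nonneg (f (i+1) - f i)]
    have hmv := Convex.norm_image_sub_le_of_norm_hasFDerivWithin_le
      (f := S.compWord α) (f' := fun ξ => S.derivWord α ξ) (C := K * lam)
      (fun ξ hξ => (S.hasFDerivAt_compWord α (hsegW hξ)).hasFDerivWithinAt)
      (fun ξ hξ => by
        have := hKB α hα ξ (hsegW hξ) q₀ hq₀
        calc ‖S.derivWord α ξ‖ ≤ K * ‖S.derivWord α q₀‖ := this
          _ = K * lam := rfl)
      (convex_segment _ _) (left_mem_segment ℝ _ _) (right_mem_segment ℝ _ _)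
    rw [dist_eq_norm]
    calc ‖S.compWord α (f (i+1)) - S.compWord α (f i)‖
        ≤ K * lam * ‖f (i+1) - f i‖ := hmv
      _ ≤ K * lam * δ := by
          have h2 : ‖f (i+1) - f i‖ ≤ δ := by
            rw [← dist_eq_norm]
            exact hfd i hi
          exact mul_le_mul_of_nonneg_left h2 (mul_nonneg hKnn hlamnn)
  have hind : ∀ i ≤ N, dist (S.compWord α (f i)) (S.compWord α (f 0)) ≤
      i * (K * lam * δ) := by
    intro i
    induction i with
    | zero =>
        intro _
        simp
    | succ i ih =>
        intro hi
        have h1 := ih (by omega)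
        have h2 := hstep i (by omega)
        calc dist (S.compWord α (f (i+1))) (S.compWord α (f 0))
            ≤ dist (S.compWord α (f (i+1))) (S.compWord α (f i)) +
              dist (S.compWord α (f i)) (S.compWord α (f 0)) := dist_triangle _ _ _
          _ ≤ K * lam * δ + i * (K * lam * δ) := add_le_add h2 h1
          _ = ((i+1 : ℕ) : ℝ) * (K * lam * δ) := by push_cast; ring
  have := hind N le_rfl
  calc dist (S.compWord α (f N)) (S.compWord α (f 0)) ≤ N * (K * lam * δ) := this
    _ = N * (K * ‖S.derivWord α q₀‖ * δ) := rfl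

section Nontriv
variable [Nontrivial (EuclideanSpace ℝ (Fin n))]

theorem norm_derivWord_pos (α : List E) {p : EuclideanSpace ℝ (Fin n)} (hp : p ∈ S.W) :
    0 < ‖S.derivWord α p‖ :=
  conformal_norm_pos (S.conformal_derivWord α hp)

/-- Images of open subsets of `W` under `compWord` are open. -/
theorem isOpen_image_compWord (α : List E) {U : Set (EuclideanSpace ℝ (Fin n))}
    (hUo : IsOpen U) (hUW : U ⊆ S.W) : IsOpen (S.compWord α '' U) := by
  set F := S.compWord α with hF
  rw [Metric.isOpen_iff]
  rintro q ⟨p, hpU, rfl⟩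
  obtain ⟨t', ht'pos, ht'⟩ := Metric.isOpen_iff.1 hUo p hpU
  set t := t' / 2 with htdef
  have htpos : 0 < t := half_pos ht'pos
  have hcb : closedBall p t ⊆ U := fun w hw =>
    ht' (lt_of_le_of_lt (mem_closedBall.mp hw) (half_lt_self ht'pos))
  have hcbW : closedBall p t ⊆ S.W := hcb.trans hUW
  have hFcont : ContinuousOn F (closedBall p t) := (S.continuousOn_compWord α).mono hcbW
  have hsph : sphere p t ⊆ closedBall p t := sphere_subset_closedBall
  have hsphne : (sphere p t).Nonempty := NormedSpace.sphere_nonempty.mpr htpos.le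
  obtain ⟨w₀, hw₀s, hw₀min⟩ := (isCompact_sphere p t).exists_isMinOn hsphne
    (((continuousOn_const.sub (hFcont.mono hsph)).norm) :
      ContinuousOn (fun w => ‖F p - F w‖) _)
  set m := ‖F p - F w₀‖ with hm
  have hmpos : 0 < m := by
    rw [hm, norm_sub_pos_iff]
    intro hEq
    have hpw : p = w₀ :=
      S.injOn_compWord α (hcbW (mem_closedBall_self htpos.le)) (hcbW (hsph hw₀s)) hEq
    have hd : dist w₀ p = t := mem_sphere.mp hw₀s
    rw [← hpw, dist_self] at hd
    exact htpos.ne hd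
  refine ⟨m / 2, half_pos hmpos, fun y hy => ?_⟩
  have hyd : dist y (F p) < m / 2 := mem_ball.mp hy
  -- minimize ‖F w - y‖ over the closed ball
  obtain ⟨w₁, hw₁cb, hw₁min⟩ := (isCompact_closedBall p t).exists_isMinOn
    ⟨p, mem_closedBall_self htpos.le⟩
    (((hFcont.sub continuousOn_const).norm) : ContinuousOn (fun w => ‖F w - y‖) _)
  have hw₁notsph : dist w₁ p < t := by
    rcases lt_or_eq_of_le (mem_closedBall.mp hw₁cb) with h | h
    · exact h
    · exfalso
      have hmin_at_p : ‖F w₁ - y‖ ≤ ‖F p - y‖ := hw₁min (mem_closedBall_self htpos.le)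
      have h1 : ‖F p - y‖ < m / 2 := by
        rw [← dist_eq_norm, dist_comm]; exact hyd
      have h2 : m ≤ ‖F p - F w₁‖ := hw₀min (mem_sphere.mpr h)
      have h3 : dist (F p) (F w₁) ≤ dist (F p) y + dist y (F w₁) := dist_triangle _ _ _
      have h4 : dist y (F w₁) = ‖F w₁ - y‖ := by rw [dist_comm, dist_eq_norm]
      have h5 : dist (F p) y < m / 2 := by rw [dist_comm]; exact hyd
      have h6 : dist (F p) (F w₁) = ‖F p - F w₁‖ := dist_eq_norm _ _
      nlinarith [hmin_at_p, h1, h2, h3, h4, h5, h6]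
  -- first-order condition at the interior minimum
  have hw₁W : w₁ ∈ S.W := hcbW hw₁cb
  have hDer : HasFDerivAt F (S.derivWord α w₁) w₁ := S.hasFDerivAt_compWord α hw₁W
  have hsubder : HasFDerivAt (fun w => F w - y) (S.derivWord α w₁) w₁ := hDer.sub_const y
  have hG2 : HasFDerivAt (fun w => (inner ℝ (F w - y) (F w - y)))
      ((fderivInnerCLM ℝ (F w₁ - y, F w₁ - y)).comp
        ((S.derivWord α w₁).prod (S.derivWord α w₁))) w₁ :=
    HasFDerivAt.inner ℝ hsubder hsubder
  have hlocmin : IsLocalMin (fun w => (inner ℝ (F w - y) (F w - y))) w₁ := by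
    have hmin2 : IsMinOn (fun w => (inner ℝ (F w - y) (F w - y))) (closedBall p t) w₁ := by
      intro w hw
      have h1 : ‖F w₁ - y‖ ≤ ‖F w - y‖ := hw₁min hw
      simp only [real_inner_self_eq_norm_sq]
      exact pow_le_pow_left₀ (norm_nonneg _) h1 2
    exact hmin2.isLocalMin (closedBall_mem_nhds_of_mem hw₁notsph)
  have hzero := hlocmin.hasFDerivAt_eq_zero hG2
  -- extract that F w₁ = y using surjectivity of the conformal derivative
  obtain ⟨v, hv⟩ := conformal_surjective (S.conformal_derivWord α hw₁W) (F w₁ - y)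
  have hzv := congrArg (fun T : _ →L[ℝ] ℝ => T v) hzero
  simp only [ContinuousLinearMap.comp_apply, ContinuousLinearMap.prod_apply,
    fderivInnerCLM_apply, ContinuousLinearMap.zero_apply, hv] at hzv
  have : (inner ℝ (F w₁ - y) (F w₁ - y)) = 0 := by linarith [hzv]
  have hFw₁ : F w₁ = y := by
    have := inner_self_eq_zero.mp this
    exact sub_eq_zero.mp this
  exact ⟨w₁, hcb hw₁cb, hFw₁⟩


/-- Key quantitative lemma: the image of `closedBall z ρ` under `compWord α` contains
a ball around `compWord α z` of radius comparable to `‖derivWord α q₀‖ * ρ`. -/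
theorem ball_subset_image_closedBall
    {K : ℝ}
    (hKB : ∀ ω : List E, ω ≠ [] → ∀ p ∈ S.W, ∀ q ∈ S.W,
      ‖S.derivWord ω p‖ ≤ K * ‖S.derivWord ω q‖)
    (α : List E) (hα : α ≠ [])
    {z : EuclideanSpace ℝ (Fin n)} {ρ : ℝ} (hρ : 0 < ρ)
    (hcbW : closedBall z (2*ρ) ⊆ S.W)
    {q₀ : EuclideanSpace ℝ (Fin n)} (hq₀ : q₀ ∈ S.W) :
    ball (S.compWord α z) (‖S.derivWord α q₀‖ * ρ / K) ⊆
      S.compWord α '' (closedBall z ρ) := by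
  set F := S.compWord α with hFdef
  set lam := ‖S.derivWord α q₀‖ with hlam
  have hlampos : 0 < lam := S.norm_derivWord_pos α hq₀
  have hK1 : (1:ℝ) ≤ K := by
    have h := hKB α hα q₀ hq₀ q₀ hq₀
    nlinarith [hlampos]
  have hKpos : 0 < K := lt_of_lt_of_le one_pos hK1
  set t := lam * ρ / K with ht
  have htpos : 0 < t := by positivity
  have h2ρ : 0 < 2*ρ := by linarith
  have hzW : z ∈ S.W := hcbW (mem_closedBall_self h2ρ.le)
  have hballW : ball z (2*ρ) ⊆ S.W := ball_subset_closedBall.trans hcbW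
  have hUopen : IsOpen (F '' ball z (2*ρ)) := S.isOpen_image_compWord α isOpen_ball hballW
  set U := F '' ball z (2*ρ) with hUdef
  set y := F z with hy
  have hyU : y ∈ U := mem_image_of_mem F (mem_ball_self h2ρ)
  set Kc := closedBall z (2*ρ) with hKc
  have hKcW : Kc ⊆ S.W := hcbW
  set Kim := F '' Kc with hKim
  have hUK : U ⊆ Kim := image_mono (f := F) ball_subset_closedBall
  set h := Function.invFunOn F Kc with hh
  have hFh : ∀ p ∈ Kim, F (h p) = p := by
    rintro p ⟨w, hw, rfl⟩
    exact Function.invFunOn_eq ⟨w, hw, rfl⟩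
  have hhmem : ∀ p ∈ Kim, h p ∈ Kc := by
    rintro p ⟨w, hw, rfl⟩
    exact Function.invFunOn_mem ⟨w, hw, rfl⟩
  have hhz : h y = z := by
    apply S.injOn_compWord α (hKcW (hhmem y (hUK hyU))) hzW
    exact hFh y (hUK hyU)
  have hKccomp : IsCompact Kc := isCompact_closedBall _ _
  have hFcont : ContinuousOn F Kc := (S.continuousOn_compWord α).mono hKcW
  -- continuity of the inverse on the compact image
  have hcontOn : ContinuousOn h Kim := by
    haveI : CompactSpace Kc := isCompact_iff_compactSpace.mp hKccomp
    have hbij : Function.Bijective (fun w : Kc => (⟨F w, mem_image_of_mem F w.2⟩ : Kim)) := by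
      constructor
      · intro a b hab
        have h1 := congrArg Subtype.val hab
        exact Subtype.ext (S.injOn_compWord α (hKcW a.2) (hKcW b.2) h1)
      · rintro ⟨p, w, hw, rfl⟩
        exact ⟨⟨w, hw⟩, rfl⟩
    set e := Equiv.ofBijective _ hbij with he
    have hecont : Continuous (e : Kc → Kim) := by
      refine Continuous.subtype_mk ?_ _
      exact hFcont.restrict
    let H := Continuous.homeoOfEquivCompactToT2 (f := e) hecont
    rw [continuousOn_iff_continuous_restrict]
    have hrestr : Kim.domRestrict h = fun p : Kim => ((H.symm p : Kc) : EuclideanSpace ℝ (Fin n)) := by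
      funext p
      have h1 : F (h p) = p := hFh p p.2
      have h2 : F ((H.symm p : Kc) : EuclideanSpace ℝ (Fin n)) = p :=
        congrArg Subtype.val (H.apply_symm_apply p)
      exact S.injOn_compWord α (hKcW (hhmem p p.2)) (hKcW (H.symm p).2) (h1.trans h2.symm)
    rw [hrestr]
    exact continuous_subtype_val.comp H.symm.continuous
  -- differentiability of the inverse with norm bound
  have hder : ∀ p ∈ U, HasFDerivAt h ((S.derivWord α (h p)).inverse) p ∧
      ‖(S.derivWord α (h p)).inverse‖ ≤ K / lam := by
    intro p hpU
    have hpK : p ∈ Kim := hUK hpU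
    have hwW : h p ∈ S.W := hKcW (hhmem p hpK)
    have hconf := S.conformal_derivWord α hwW
    have hbij : Function.Bijective (S.derivWord α (h p)) :=
      ⟨hconf.injective, conformal_surjective hconf⟩
    set Aeq := (LinearEquiv.ofBijective
      ((S.derivWord α (h p)) : EuclideanSpace ℝ (Fin n) →ₗ[ℝ] EuclideanSpace ℝ (Fin n))
      hbij).toContinuousLinearEquiv with hAeqdef
    have hAcoe : (Aeq : EuclideanSpace ℝ (Fin n) →L[ℝ] EuclideanSpace ℝ (Fin n))
        = S.derivWord α (h p) := by
      ext v; rfl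
    have hcontAt : ContinuousAt h p :=
      (hcontOn p hpK).continuousAt (mem_of_superset (hUopen.mem_nhds hpU) hUK)
    have hfg : ∀ᶠ q in 𝓝 p, F (h q) = q := by
      filter_upwards [hUopen.mem_nhds hpU] with q hq
      exact hFh q (hUK hq)
    have hFder : HasFDerivAt F
        ((Aeq : EuclideanSpace ℝ (Fin n) →L[ℝ] EuclideanSpace ℝ (Fin n))) (h p) := by
      rw [hAcoe]; exact S.hasFDerivAt_compWord α hwW
    have hhder := hFder.of_local_left_inverse hcontAt hfg
    have hinv_eq : (S.derivWord α (h p)).inverse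
        = ((Aeq.symm : EuclideanSpace ℝ (Fin n) →L[ℝ] EuclideanSpace ℝ (Fin n))) := by
      rw [← hAcoe]; exact ContinuousLinearMap.inverse_equiv Aeq
    have hAnorm_ge : lam / K ≤ ‖S.derivWord α (h p)‖ := by
      have h1 := hKB α hα q₀ hq₀ (h p) hwW
      rw [div_le_iff₀ hKpos]
      calc lam ≤ K * ‖S.derivWord α (h p)‖ := h1
        _ = ‖S.derivWord α (h p)‖ * K := mul_comm _ _
    refine ⟨by rw [hinv_eq]; exact hhder, ?_⟩
    rw [hinv_eq]
    refine ContinuousLinearMap.opNorm_le_bound _ (by positivity) fun u => ?_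
    simp only [ContinuousLinearEquiv.coe_coe]
    have hApos : 0 < ‖S.derivWord α (h p)‖ := S.norm_derivWord_pos α hwW
    have h2 : ‖u‖ = ‖S.derivWord α (h p)‖ * ‖Aeq.symm u‖ := by
      conv_lhs => rw [← Aeq.apply_symm_apply u]
      have h3 : Aeq (Aeq.symm u) = S.derivWord α (h p) (Aeq.symm u) := by
        rw [← hAcoe]; rfl
      rw [h3]
      exact conformal_norm_apply hconf _
    have h4 : ‖Aeq.symm u‖ = ‖u‖ / ‖S.derivWord α (h p)‖ := by
      field_simp [h2]
      rw [h2]; ring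
    rw [h4]
    calc ‖u‖ / ‖S.derivWord α (h p)‖ ≤ ‖u‖ / (lam / K) :=
        div_le_div_of_nonneg_left (norm_nonneg u) (by positivity) hAnorm_ge
      _ = K / lam * ‖u‖ := by field_simp
  -- mean value estimate on convex subsets of U
  have hmv : ∀ sset : Set (EuclideanSpace ℝ (Fin n)), Convex ℝ sset → sset ⊆ U →
      ∀ a ∈ sset, ∀ b ∈ sset, ‖h b - h a‖ ≤ (K / lam) * ‖b - a‖ := by
    intro sset hconv hsub a ha b hb
    exact Convex.norm_image_sub_le_of_norm_hasFDerivWithin_le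
      (fun q hq => ((hder q (hsub hq)).1).hasFDerivWithinAt)
      (fun q hq => (hder q (hsub hq)).2) hconv ha hb
  have himcl : IsClosed (F '' closedBall z ρ) :=
    ((isCompact_closedBall z ρ).image_of_continuousOn
      (hFcont.mono (closedBall_subset_closedBall (by linarith)))).isClosed
  have hsub1 : closedBall z ρ ⊆ ball z (2*ρ) := closedBall_subset_ball (by linarith)
  have hKt : K / lam * t = ρ := by
    rw [ht]; field_simp
  -- Step 1 : ball y t ⊆ U
  have hstep1 : ball y t ⊆ U := by
    intro p hp
    by_contra hpU
    set L := fun τ : ℝ => y + τ • (p - y) with hL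
    have hLcont : Continuous L := by
      exact continuous_const.add ((continuous_id.smul continuous_const))
    have hL0 : L 0 = y := by simp [hL]
    have hL1 : L 1 = p := by simp [hL]
    set Ebad := {τ : ℝ | τ ∈ Icc (0:ℝ) 1 ∧ L τ ∉ U} with hEbad
    have hEne : (1:ℝ) ∈ Ebad := ⟨⟨zero_le_one, le_refl 1⟩, by rwa [hL1]⟩
    have hEclosed : IsClosed Ebad := by
      have h1 : Ebad = Icc 0 1 ∩ L ⁻¹' Uᶜ := rfl
      rw [h1]
      exact isClosed_Icc.inter (hUopen.isClosed_compl.preimage hLcont)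
    have hEbdd : BddBelow Ebad := ⟨0, fun τ hτ => hτ.1.1⟩
    set τs := sInf Ebad with hτs
    have hτsmem : τs ∈ Ebad := hEclosed.csInf_mem ⟨1, hEne⟩ hEbdd
    have hτspos : 0 < τs := by
      rcases lt_or_eq_of_le hτsmem.1.1 with h1 | h1
      · exact h1
      · exfalso
        have : L τs ∈ U := by rw [← h1, hL0]; exact hyU
        exact hτsmem.2 this
    have hbefore : ∀ τ, 0 ≤ τ → τ < τs → L τ ∈ U := by
      intro τ h0 hlt
      by_contra hno
      have hmem : τ ∈ Ebad := ⟨⟨h0, hlt.le.trans hτsmem.1.2⟩, hno⟩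
      exact absurd (csInf_le hEbdd hmem) (not_le.mpr hlt)
    set Sg := L '' (Ico (0:ℝ) τs) with hSg
    have hSgsub : Sg ⊆ U := by
      rintro _ ⟨τ, ⟨h0, hτ⟩, rfl⟩
      exact hbefore τ h0 hτ
    have hSgconv : Convex ℝ Sg := by
      have heq : Sg = (AffineMap.lineMap y p : ℝ →ᵃ[ℝ] EuclideanSpace ℝ (Fin n)) ''
          (Ico (0:ℝ) τs) := by
        apply image_congr
        intro τ _
        show y + τ • (p - y) = _
        rw [AffineMap.lineMap_apply_module, smul_sub, sub_smul, one_smul]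
        abel
      rw [heq]
      exact (convex_Ico _ _).affine_image _
    have hySg : y ∈ Sg := ⟨0, ⟨le_refl 0, hτspos⟩, hL0⟩
    have himg : Sg ⊆ F '' closedBall z ρ := by
      rintro _ ⟨τ, hτmem, rfl⟩
      have hLτSg : L τ ∈ Sg := ⟨τ, hτmem, rfl⟩
      have hd := hmv Sg hSgconv hSgsub y hySg (L τ) hLτSg
      rw [hhz] at hd
      have hnorm : ‖L τ - y‖ = τ * ‖p - y‖ := by
        rw [hL]
        simp only [add_sub_cancel_left]
        rw [norm_smul, Real.norm_eq_abs, abs_of_nonneg hτmem.1]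
      have hpy : ‖p - y‖ < t := by
        rw [← dist_eq_norm]
        exact mem_ball.mp hp
      have hlt : ‖h (L τ) - z‖ < ρ := by
        have hτ1 : τ ≤ 1 := hτmem.2.le.trans hτsmem.1.2
        have h5 : ‖L τ - y‖ ≤ ‖p - y‖ := by
          rw [hnorm]
          nlinarith [norm_nonneg (p - y), hτmem.1]
        have h6 : (K / lam) * ‖L τ - y‖ < (K / lam) * t := by
          have : ‖L τ - y‖ < t := lt_of_le_of_lt h5 hpy
          exact mul_lt_mul_of_pos_left this (by positivity)
        calc ‖h (L τ) - z‖ ≤ (K / lam) * ‖L τ - y‖ := hd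
          _ < (K / lam) * t := h6
          _ = ρ := hKt
      refine ⟨h (L τ), ?_, hFh _ (hUK (hSgsub hLτSg))⟩
      rw [mem_closedBall, dist_eq_norm]
      exact hlt.le
    have hbU : L τs ∈ F '' closedBall z ρ := by
      have h1 : τs ∈ closure (Ico (0:ℝ) τs) := by
        rw [closure_Ico hτspos.ne]
        exact ⟨hτsmem.1.1, le_refl _⟩
      have h2 : L τs ∈ closure Sg := by
        have h3 := image_closure_subset_closure_image (s := Ico (0:ℝ) τs) hLcont
        exact h3 ⟨τs, h1, rfl⟩
      have h4 : closure Sg ⊆ F '' closedBall z ρ := by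
        rw [← himcl.closure_eq]
        exact closure_mono himg
      exact h4 h2
    exact hτsmem.2 ((image_mono (f := F) hsub1) hbU)
  -- Step 2 : conclude
  intro p hp
  have hsegsub : segment ℝ y p ⊆ U :=
    ((convex_ball y t).segment_subset (mem_ball_self htpos) hp).trans hstep1
  have hd := hmv (segment ℝ y p) (convex_segment y p) hsegsub y
    (left_mem_segment ℝ y p) p (right_mem_segment ℝ y p)
  rw [hhz] at hd
  have hpy : ‖p - y‖ < t := by
    rw [← dist_eq_norm]
    exact mem_ball.mp hp
  have hlt : ‖h p - z‖ < ρ := by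
    calc ‖h p - z‖ ≤ (K / lam) * ‖p - y‖ := hd
      _ < (K / lam) * t := mul_lt_mul_of_pos_left hpy (by positivity)
      _ = ρ := hKt
  refine ⟨h p, ?_, hFh p (hUK (hstep1 hp))⟩
  rw [mem_closedBall, dist_eq_norm]
  exact hlt.le


/-- Separation: points of the limit set never enter images of the hole. -/
theorem pi_not_mem_image_hole
    (π : (ℕ → E) → EuclideanSpace ℝ (Fin n))
    (hπ : ∀ ω : ℕ → E, ∀ m : ℕ,
      π ω ∈ S.compWord (List.ofFn fun i : Fin m => ω i) '' S.X)
    {z : EuclideanSpace ℝ (Fin n)} {ρ : ℝ} (hρ : 0 < ρ)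
    (hInt : ball z (2*ρ) ⊆ interior S.X)
    (hdisj : Disjoint (ball z (2*ρ)) (closure (⋃ e : E, S.φ e '' S.X)))
    (α : List E) (τ : ℕ → E) :
    π τ ∉ S.compWord α '' (closedBall z ρ) := by
  rintro ⟨w, hwcb, hEq⟩
  have hcb2 : closedBall z ρ ⊆ ball z (2*ρ) := closedBall_subset_ball (by linarith)
  have hwb : w ∈ ball z (2*ρ) := hcb2 hwcb
  have hwX : w ∈ S.X := interior_subset (hInt hwb)
  have hwW : w ∈ S.W := S.hXW hwX
  by_cases hpre : ∀ i (hi : i < α.length), τ i = α[i]'hi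
  · -- τ extends α
    obtain ⟨u, huX, huEq⟩ := hπ τ (α.length + 1)
    have hofn : (List.ofFn fun i : Fin (α.length + 1) => τ i) = α ++ [τ α.length] := by
      apply List.ext_getElem
      · simp
      · intro i h1 h2
        rw [List.getElem_ofFn]
        simp only [List.length_ofFn] at h1
        rcases Nat.lt_succ_iff_lt_or_eq.mp h1 with hi | hi
        · rw [List.getElem_append_left hi]
          exact hpre i hi
        · subst hi
          rw [List.getElem_append_right (le_refl _)]
          simp
    rw [hofn, S.compWord_append] at huEq
    have hX' : S.compWord [τ α.length] u ∈ S.X := S.mapsTo_X _ huX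
    have hww : w = S.compWord [τ α.length] u :=
      S.injOn_compWord α hwW (S.hXW hX') (hEq.trans huEq.symm)
    have hwY : w ∈ ⋃ e : E, S.φ e '' S.X := by
      rw [hww]
      exact mem_iUnion.mpr ⟨τ α.length, ⟨u, huX, rfl⟩⟩
    exact Set.disjoint_left.mp hdisj hwb (subset_closure hwY)
  · -- first disagreement
    push_neg at hpre
    set Jset := {j : ℕ | ∃ hj : j < α.length, τ j ≠ α[j]'hj} with hJset
    have hJne : Jset.Nonempty := by
      obtain ⟨i, hi, hne⟩ := hpre
      exact ⟨i, hi, hne⟩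
    set j := sInf Jset with hj
    obtain ⟨hjm, hjne⟩ : ∃ hj : j < α.length, τ j ≠ α[j]'hj := Nat.sInf_mem hJne
    have hprev : ∀ i (hi : i < j), τ i = α[i]'(hi.trans hjm) := by
      intro i hi
      by_contra hne2
      exact Nat.notMem_of_lt_sInf hi ⟨hi.trans hjm, hne2⟩
    set σ := α.take j with hσ
    set rest := α.drop (j+1) with hrest
    have hsplit : α = σ ++ (α[j]'hjm) :: rest := by
      conv_lhs => rw [← List.take_append_drop j α]
      rw [hσ, hrest, List.drop_eq_getElem_cons hjm]
    have hσlen : σ.length = j := by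
      rw [hσ, List.length_take]
      exact min_eq_left hjm.le
    -- π τ in the cylinder σ ++ [τ j]
    obtain ⟨u, huX, huEq⟩ := hπ τ (j+1)
    have hofn : (List.ofFn fun i : Fin (j+1) => τ i) = σ ++ [τ j] := by
      apply List.ext_getElem
      · simp [hσlen]
      · intro i h1 h2
        rw [List.getElem_ofFn]
        simp only [List.length_ofFn] at h1
        rcases Nat.lt_succ_iff_lt_or_eq.mp h1 with hi | hi
        · rw [List.getElem_append_left (by omega : i < σ.length)]
          have : σ[i]'(by omega) = α[i]'(by omega) := by simp [hσ]
          rw [this]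
          exact hprev i hi
        · rw [List.getElem_append_right (by omega : σ.length ≤ i)]
          simp [hσlen, hi]
    rw [hofn, S.compWord_append] at huEq
    have hcw : S.compWord σ (S.compWord ((α[j]'hjm) :: rest) w) = π τ := by
      rw [← hEq]
      conv_rhs => rw [hsplit]
      rw [S.compWord_append]
      rfl
    have h1W : S.compWord ((α[j]'hjm) :: rest) w ∈ S.W := S.hXW (S.mapsTo_X _ hwX)
    have h2W : S.compWord [τ j] u ∈ S.W := S.hXW (S.mapsTo_X _ huX)
    have hkey : S.compWord ((α[j]'hjm) :: rest) w = S.compWord [τ j] u :=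
      S.injOn_compWord σ h1W h2W (hcw.trans huEq.symm)
    have hane : (α[j]'hjm) ≠ τ j := fun hEq' => hjne hEq'.symm
    -- the open image of the hole
    have hVsubW : ball z (2*ρ) ⊆ S.W := (hInt.trans interior_subset).trans S.hXW
    set Vs := S.compWord rest '' (ball z (2*ρ)) with hVs
    have hVopen : IsOpen Vs := S.isOpen_image_compWord rest isOpen_ball hVsubW
    have hVX : Vs ⊆ S.X := by
      rintro _ ⟨v', hv', rfl⟩
      exact S.mapsTo_X rest (interior_subset (hInt hv'))
    have hVint : Vs ⊆ interior S.X := interior_maximal hVX hVopen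
    set W2 := S.φ (α[j]'hjm) '' Vs with hW2
    have hW2open : IsOpen W2 := by
      have himeq : S.φ (α[j]'hjm) '' Vs = S.compWord [α[j]'hjm] '' Vs := rfl
      rw [hW2, himeq]
      exact S.isOpen_image_compWord _ hVopen (hVX.trans S.hXW)
    have hbu : S.φ (τ j) u ∈ W2 := by
      have h3 : S.compWord [τ j] u = S.φ (τ j) u := rfl
      rw [← h3, ← hkey]
      exact mem_image_of_mem _ ⟨w, hwb, rfl⟩
    have huW : u ∈ S.W := S.hXW huX
    have hcont : ContinuousAt (S.φ (τ j)) u := (S.hDeriv (τ j) u huW).continuousAt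
    have hnb : (S.φ (τ j)) ⁻¹' W2 ∈ 𝓝 u := hcont.preimage_mem_nhds (hW2open.mem_nhds hbu)
    have hucl : u ∈ closure (interior S.X) := by rw [← S.hXreg]; exact huX
    obtain ⟨u', hu'⟩ := mem_closure_iff_nhds.mp hucl _ hnb
    have hosc := S.hOSC (α[j]'hjm) (τ j) hane
    have hin1 : S.φ (τ j) u' ∈ S.φ (α[j]'hjm) '' interior S.X :=
      image_mono hVint hu'.1
    have hin2 : S.φ (τ j) u' ∈ S.φ (τ j) '' interior S.X := mem_image_of_mem _ hu'.2
    exact Set.disjoint_left.mp hosc hin1 hin2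

end Nontriv

end CIFS

/-- If a CIFS satisfies `X ∖ closure(⋃ₑ φₑ(X)) ≠ ∅`, then the limit set
`J = range π` is porous at the (unique) fixed point of `φ_ω` for every nonempty word `ω`,
and the set of such fixed points is dense in `J`; in particular `J` is porous at every
point of a dense subset of `J`. -/
theorem stmt0 {n : ℕ} {E : Type*} [Countable E] [Nontrivial E]
    (S : CIFS n E) (hBDP : S.BDP)
    (π : (ℕ → E) → EuclideanSpace ℝ (Fin n))
    (hπ : ∀ ω : ℕ → E, ∀ m : ℕ,
      π ω ∈ S.compWord (List.ofFn fun i : Fin m => ω i) '' S.X)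
    (hxx1 : (S.X \ closure (⋃ e : E, S.φ e '' S.X)).Nonempty) :
    (∀ ω : List E, ω ≠ [] → ∀ x ∈ S.X, S.compWord ω x = x →
        PorousAt (Set.range π) x) ∧
    Set.range π ⊆
      closure {x | ∃ ω : List E, ω ≠ [] ∧ x ∈ S.X ∧ S.compWord ω x = x} := by
  classical
  constructor
  · -- porosity at fixed points
    intro ω hω x hxX hfix
    rcases subsingleton_or_nontrivial (EuclideanSpace ℝ (Fin n)) with hss | hnt
    · exfalso
      obtain ⟨p0, hp0X, hp0n⟩ := hxx1
      obtain ⟨e₀⟩ : Nonempty E := inferInstance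
      obtain ⟨x0, hx0⟩ := S.hXconn.nonempty
      apply hp0n
      apply subset_closure
      exact mem_iUnion.mpr ⟨e₀, ⟨x0, hx0, Subsingleton.elim _ _⟩⟩
    haveI := hnt
    obtain ⟨K, hK1, hKB⟩ := hBDP
    have hKpos : (0:ℝ) < K := lt_of_lt_of_le one_pos hK1
    -- construct the hole
    obtain ⟨p0, hp0X, hp0n⟩ := hxx1
    have hopenH : IsOpen (interior S.X ∩ (closure (⋃ e : E, S.φ e '' S.X))ᶜ) :=
      isOpen_interior.inter isClosed_closure.isOpen_compl
    have hp0cl : p0 ∈ closure (interior S.X) := by rw [← S.hXreg]; exact hp0X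
    obtain ⟨z, hz⟩ : (interior S.X ∩ (closure (⋃ e : E, S.φ e '' S.X))ᶜ).Nonempty := by
      have hnbhd : (closure (⋃ e : E, S.φ e '' S.X))ᶜ ∈ 𝓝 p0 :=
        isClosed_closure.isOpen_compl.mem_nhds hp0n
      obtain ⟨q, hq⟩ := mem_closure_iff_nhds.mp hp0cl _ hnbhd
      exact ⟨q, hq.2, hq.1⟩
    obtain ⟨ρ₀, hρ₀pos, hρ₀⟩ := Metric.isOpen_iff.mp hopenH z hz
    set ρ := ρ₀ / 4 with hρdef
    have hρpos : 0 < ρ := by positivity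
    have hsub0 : closedBall z (2*ρ) ⊆ ball z ρ₀ := by
      apply closedBall_subset_ball
      rw [hρdef]; linarith
    have hIntX : ball z (2*ρ) ⊆ interior S.X := fun w hw =>
      (hρ₀ (hsub0 (ball_subset_closedBall hw))).1
    have hdisj : Disjoint (ball z (2*ρ)) (closure (⋃ e : E, S.φ e '' S.X)) := by
      rw [Set.disjoint_left]
      intro w hw hwcl
      exact (hρ₀ (hsub0 (ball_subset_closedBall hw))).2 hwcl
    have hcbW : closedBall z (2*ρ) ⊆ S.W := fun w hw =>
      S.hXW (interior_subset (hρ₀ (hsub0 hw)).1)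
    have hzX : z ∈ S.X := interior_subset (hIntX (mem_ball_self (by positivity)))
    -- the contraction factor
    set lam := ‖S.derivWord ω x‖ with hlamdef
    have hxW : x ∈ S.W := S.hXW hxX
    have hlampos : 0 < lam := S.norm_derivWord_pos ω hxW
    have hlam1 : lam < 1 := by
      have h1 : lam ≤ S.s ^ ω.length := S.norm_derivWord_le ω hxW
      have hlen : 1 ≤ ω.length := by
        cases ω with
        | nil => exact absurd rfl hω
        | cons a l => simp
      have h2 : S.s ^ ω.length ≤ S.s := by
        calc S.s ^ ω.length ≤ S.s ^ 1 := pow_le_pow_of_le_one S.hs.1.le S.hs.2.le hlen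
          _ = S.s := pow_one _
      exact lt_of_le_of_lt (h1.trans h2) S.hs.2
    -- iterated words
    set Wk : ℕ → List E := fun k => Nat.rec ([] : List E) (fun _ l => ω ++ l) k with hWkdef
    have hWksucc : ∀ k, Wk (k+1) = ω ++ Wk k := fun k => rfl
    have hWkfix : ∀ k, S.compWord (Wk k) x = x := by
      intro k
      induction k with
      | zero => rfl
      | succ k ih =>
          rw [hWksucc, S.compWord_append]
          simp only [Function.comp_apply]
          rw [ih]
          exact hfix
    have hWkne : ∀ k, Wk (k+1) ≠ [] := by
      intro k
      rw [hWksucc]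
      intro hcon
      exact hω (List.append_eq_nil_iff.mp hcon).1
    have hWknorm : ∀ k, ‖S.derivWord (Wk k) x‖ = lam ^ k := by
      intro k
      induction k with
      | zero =>
          show ‖S.derivWord [] x‖ = lam ^ 0
          have h0 : S.derivWord [] x = ContinuousLinearMap.id ℝ (EuclideanSpace ℝ (Fin n)) := rfl
          rw [h0, pow_zero, ContinuousLinearMap.norm_id]
      | succ k ih =>
          rw [hWksucc, S.derivWord_append, hWkfix]
          rw [conformal_norm_comp (S.conformal_derivWord ω hxW), ih]
          rw [← hlamdef, pow_succ]
          ring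
    -- chain from z to x
    obtain ⟨δ, hδpos, hδW⟩ := S.hXcompact.exists_cthickening_subset_open S.hWopen S.hXW
    obtain ⟨N, f, hf0, hfN, hfX, hfd⟩ := S.exists_chain hδpos hzX hxX
    have hdistk : ∀ k, dist (S.compWord (Wk (k+1)) z) x ≤ N * (K * lam ^ (k+1) * δ) := by
      intro k
      have h1 := S.dist_image_le_chain hKB (Wk (k+1)) (hWkne k) hδpos hδW hxW
        (by linarith) hfX hfd
      rw [hf0, hfN] at h1
      rw [hWkfix (k+1), hWknorm (k+1)] at h1
      rw [dist_comm]
      exact h1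
    set Λ := N * (K * δ) + ρ / K with hΛdef
    have hΛpos : 0 < Λ := by positivity
    set c1 := lam * ρ / (Λ * K) with hc1def
    have hc1pos : 0 < c1 := by positivity
    set c := min (1/2 : ℝ) c1 with hcdef
    have hcpos : 0 < c := lt_min (by norm_num) hc1pos
    refine ⟨c, ⟨hcpos, lt_of_le_of_lt (min_le_left _ _) (by norm_num)⟩,
      min Λ 1, lt_min hΛpos one_pos, ?_⟩
    intro r hr
    obtain ⟨hrpos, hrlt⟩ := hr
    have hex : {k : ℕ | Λ * lam ^ k ≤ r}.Nonempty := by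
      obtain ⟨k, hk⟩ := exists_pow_lt_of_lt_one (x := r / Λ) (by positivity) hlam1
      exact ⟨k, ((lt_div_iff₀' hΛpos).mp hk).le⟩
    set k := sInf {k : ℕ | Λ * lam ^ k ≤ r} with hkdef
    have hkmem : Λ * lam ^ k ≤ r := Nat.sInf_mem hex
    have hkne0 : k ≠ 0 := by
      intro h0
      rw [h0, pow_zero, mul_one] at hkmem
      have h2 : r < Λ := lt_of_lt_of_le hrlt (min_le_left _ _)
      linarith
    obtain ⟨j, hj⟩ : ∃ j, k = j + 1 := ⟨k - 1, by omega⟩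
    have hjlt : r < Λ * lam ^ j := by
      by_contra hcon
      push_neg at hcon
      exact absurd hcon (by
        have := Nat.notMem_of_lt_sInf (show j < k by omega)
        simpa using this)
    set t := lam ^ k * ρ / K with htdef
    have htpos : 0 < t := by positivity
    have hkne : Wk k ≠ [] := by rw [hj]; exact hWkne j
    have hball := S.ball_subset_image_closedBall hKB (Wk k) hkne hρpos hcbW hxW
    rw [hWknorm] at hball
    have hsep := S.pi_not_mem_image_hole π hπ hρpos hIntX hdisj (Wk k)
    set y := S.compWord (Wk k) z with hydef
    have htgt : c1 * r < t := by
      have h1 : c1 * r < c1 * (Λ * lam ^ j) := mul_lt_mul_of_pos_left hjlt hc1pos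
      have h2 : c1 * (Λ * lam ^ j) = t := by
        rw [hc1def, htdef, hj, pow_succ]
        field_simp
      linarith
    have hcr_le_t : c * r ≤ t := by
      have h1 : c * r ≤ c1 * r := mul_le_mul_of_nonneg_right (min_le_right _ _) hrpos.le
      linarith
    have hdisty : dist y x ≤ N * (K * lam ^ k * δ) := by
      rw [hydef, hj]
      exact hdistk j
    have hsubset : ball y (c * r) ⊆ ball x r \ Set.range π := by
      intro w hw
      have h1 : dist w y < c * r := mem_ball.mp hw
      have hwt : w ∈ ball y t := mem_ball.mpr (lt_of_lt_of_le h1 hcr_le_t)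
      constructor
      · rw [mem_ball]
        have h3 : t + N * (K * lam ^ k * δ) = Λ * lam ^ k := by
          rw [htdef, hΛdef]
          ring
        calc dist w x ≤ dist w y + dist y x := dist_triangle _ _ _
          _ < t + N * (K * lam ^ k * δ) := by
              have := lt_of_lt_of_le h1 hcr_le_t
              linarith [hdisty]
          _ = Λ * lam ^ k := h3
          _ ≤ r := hkmem
      · rintro ⟨τ, hτ⟩
        exact hsep τ (hτ ▸ (hball hwt))
    have hmem : c ∈ {c' : ℝ | 0 ≤ c' ∧ ∃ y',
        Metric.ball y' (c' * r) ⊆ Metric.ball x r \ Set.range π} :=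
      ⟨hcpos.le, y, hsubset⟩
    have hbdd : BddAbove {c' : ℝ | 0 ≤ c' ∧ ∃ y',
        Metric.ball y' (c' * r) ⊆ Metric.ball x r \ Set.range π} := by
      refine ⟨2, fun c' hc' => ?_⟩
      obtain ⟨hc'0, y', hy'⟩ := hc'
      by_contra hgt
      push_neg at hgt
      have hy'mem : y' ∈ ball x r := (hy' (mem_ball_self (by nlinarith))).1
      obtain ⟨v, hv⟩ := exists_ne (0 : EuclideanSpace ℝ (Fin n))
      have hvnorm : 0 < ‖v‖ := norm_pos_iff.mpr hv
      set pfar := y' + (2*r/‖v‖) • v with hpfardef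
      have hdp : dist pfar y' = 2*r := by
        rw [hpfardef, dist_eq_norm, add_sub_cancel_left, norm_smul, Real.norm_eq_abs,
          abs_of_nonneg (by positivity : (0:ℝ) ≤ 2*r/‖v‖)]
        field_simp
      have hpfarmem : pfar ∈ ball y' (c'*r) := by
        rw [mem_ball, hdp]
        nlinarith
      have h3 := (hy' hpfarmem).1
      have h4 : dist pfar y' ≤ dist pfar x + dist x y' := dist_triangle _ _ _
      rw [hdp] at h4
      have h5 : dist pfar x < r := mem_ball.mp h3
      have h6 : dist x y' < r := by rw [dist_comm]; exact mem_ball.mp hy'mem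
      linarith
    exact le_csSup hbdd hmem
  · -- density of fixed points
    rintro pt ⟨τ, rfl⟩
    rw [Metric.mem_closure_iff]
    intro ε hε
    obtain ⟨C, hC⟩ := Metric.isBounded_iff.mp S.hXcompact.isBounded
    have hC0 : 0 ≤ C := by
      obtain ⟨x0, hx0⟩ := S.hXconn.nonempty
      have := hC hx0 hx0
      simpa using this
    obtain ⟨m₀, hm₀⟩ := exists_pow_lt_of_lt_one (x := ε / (C+1)) (by positivity) S.hs.2
    set m := m₀ + 1 with hmdef
    have hsm : S.s ^ m * C < ε := by
      have h1 : S.s ^ m ≤ S.s ^ m₀ := pow_le_pow_of_le_one S.hs.1.le S.hs.2.le (by omega)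
      have h2 : (0:ℝ) < C + 1 := by linarith
      have h3 : S.s ^ m₀ * (C+1) < ε := by
        have h4 := mul_lt_mul_of_pos_right hm₀ h2
        rwa [div_mul_cancel₀ _ (ne_of_gt h2)] at h4
      have h5 : S.s ^ m * C ≤ S.s ^ m₀ * (C+1) := by
        have h6 : (0:ℝ) ≤ S.s ^ m := pow_nonneg S.hs.1.le m
        nlinarith [pow_nonneg S.hs.1.le m₀]
      linarith
    set α := List.ofFn (fun i : Fin m => τ i) with hαdef
    have hαlen : α.length = m := by simp [hαdef, hmdef]
    have hαne : α ≠ [] := by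
      intro h0
      rw [h0] at hαlen
      simp at hαlen
    haveI hne : Nonempty S.X := (S.hXconn.nonempty).to_subtype
    haveI : CompleteSpace S.X := (S.hXcompact.isClosed).completeSpace_coe
    set T : S.X → S.X := fun p => ⟨S.compWord α p, S.mapsTo_X α p.2⟩ with hTdef
    have hLipT : LipschitzWith (S.s.toNNReal ^ m) T := by
      apply LipschitzWith.of_dist_le_mul
      intro p q
      have h1 := (S.lipschitzOnWith_compWord α).dist_le_mul
        p.1 (S.hXW p.2) q.1 (S.hXW q.2)
      rw [hαlen] at h1
      calc dist (T p) (T q) = dist (S.compWord α p.1) (S.compWord α q.1) := by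
            rw [Subtype.dist_eq]
        _ ≤ ((S.s.toNNReal ^ m : NNReal) : ℝ) * dist p.1 q.1 := h1
        _ = ((S.s.toNNReal ^ m : NNReal) : ℝ) * dist p q := by rw [Subtype.dist_eq]
    have hslt1 : S.s.toNNReal < 1 := by
      rw [← NNReal.coe_lt_coe, Real.coe_toNNReal _ S.hs.1.le, NNReal.coe_one]
      exact S.hs.2
    have hcontr : ContractingWith (S.s.toNNReal ^ m) T :=
      ⟨pow_lt_one₀ (by positivity) hslt1 (by omega), hLipT⟩
    set xf := ContractingWith.fixedPoint T hcontr with hxfdef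
    have hfixT : T xf = xf := hcontr.fixedPoint_isFixedPt
    have hfx1 : S.compWord α xf.1 = xf.1 := congrArg Subtype.val hfixT
    refine ⟨xf.1, ⟨α, hαne, xf.2, hfx1⟩, ?_⟩
    obtain ⟨u, huX, huEq⟩ := hπ τ m
    have hd := (S.lipschitzOnWith_compWord α).dist_le_mul u (S.hXW huX) xf.1 (S.hXW xf.2)
    rw [hαlen] at hd
    have hcast : ((S.s.toNNReal ^ m : NNReal) : ℝ) = S.s ^ m := by
      rw [NNReal.coe_pow, Real.coe_toNNReal _ S.hs.1.le]
    have hd' : dist (S.compWord α u) (S.compWord α xf.1) ≤ S.s ^ m * dist u xf.1 := by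
      rw [← hcast]
      exact hd
    have hdC : dist u xf.1 ≤ C := hC huX xf.2
    calc dist (π τ) xf.1 = dist (S.compWord α u) (S.compWord α xf.1) := by
          rw [← huEq, hfx1]
      _ ≤ S.s ^ m * dist u xf.1 := hd'
      _ ≤ S.s ^ m * C := mul_le_mul_of_nonneg_left hdC (pow_nonneg S.hs.1.le m)
      _ < ε := hsm
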